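/- The equation 2x·log(x) = x - 1 has a unique solution θ in the open interval (0,1), and this θ satisfies θ = exp(1/2 + W_{-1}(-1/(2√e))) where W_{-1} is the lower branch of the Lambert W function. -/

import Mathlib

open Real Set

private lemma gAnti : StrictAntiOn (fun w : ℝ => w * Real.exp w) (Set.Iic (-1)) := by
  apply strictAntiOn_of_deriv_neg (convex_Iic _)
  · exact (continuous_id.mul Real.continuous_exp).continuousOn
  · intro x hx
    rw [interior_Iic] at hx
    have h : HasDerivAt (fun w : ℝ => w * Real.exp w)
        (1 * Real.exp x + x * Real.exp x) x :=
      (hasDerivAt_id x).mul (Real.hasDerivAt_exp x)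
    rw [h.deriv]
    nlinarith [Real.exp_pos x, hx.out]

private lemma fHasDeriv (x : ℝ) (hx : x ≠ 0) :
    HasDerivAt (fun x : ℝ => 2 * (x * Real.log x) - x + 1) (2 * Real.log x + 1) x := by
  have h1 : HasDerivAt (fun x : ℝ => x * Real.log x) (Real.log x + 1) x :=
    Real.hasDerivAt_mul_log hx
  have h2 := ((h1.const_mul 2).sub (hasDerivAt_id x)).add_const 1
  rw [show 2 * Real.log x + 1 = 2 * (Real.log x + 1) - 1 by ring]
  exact h2

private lemma fcont : ContinuousOn (fun x : ℝ => 2 * (x * Real.log x) - x + 1) {(0:ℝ)}ᶜ := by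
  exact (((continuousOn_const.mul (continuousOn_id.mul Real.continuousOn_log)).sub
    continuousOn_id).add continuousOn_const)

private lemma exp_half_lt_two : Real.exp (1/2 : ℝ) < 2 := by
  have h : Real.exp (1/2 : ℝ) * Real.exp (1/2 : ℝ) = Real.exp 1 := by
    rw [← Real.exp_add]; norm_num
  have he := Real.exp_one_lt_d9
  nlinarith [Real.exp_pos (1/2 : ℝ)]

private lemma root_lt (θ : ℝ) (hθ : θ ∈ Set.Ioo (0:ℝ) 1)
    (heq : 2 * θ * Real.log θ = θ - 1) : θ < Real.exp (-(1/2) : ℝ) := by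
  by_contra hge
  push_neg at hge
  set f := fun x : ℝ => 2 * (x * Real.log x) - x + 1 with hf
  have hb := Real.exp_pos (-(1/2):ℝ)
  have hmono : StrictMonoOn f (Set.Icc (Real.exp (-(1/2):ℝ)) 1) := by
    apply strictMonoOn_of_deriv_pos (convex_Icc _ _)
    · apply fcont.mono
      intro x hx
      simp only [mem_compl_iff, mem_singleton_iff]
      have := hx.1
      intro h; rw [h] at this; linarith
    · intro x hx
      rw [interior_Icc] at hx
      have hx0 : x ≠ 0 := by intro h; rw [h] at hx; linarith [hx.1]
      rw [(fHasDeriv x hx0).deriv]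
      have : Real.log (Real.exp (-(1/2):ℝ)) < Real.log x :=
        Real.log_lt_log (Real.exp_pos _) hx.1
      rw [Real.log_exp] at this
      linarith
  have h1 : f θ = 0 := by simp only [hf]; linarith [heq]
  have h11 : f 1 = 0 := by simp [hf]
  have hθm : θ ∈ Set.Icc (Real.exp (-(1/2):ℝ)) 1 := ⟨hge, hθ.2.le⟩
  have h1m : (1:ℝ) ∈ Set.Icc (Real.exp (-(1/2):ℝ)) 1 :=
    ⟨(Real.exp_lt_one_iff.mpr (by norm_num)).le, le_refl 1⟩
  have := hmono hθm h1m hθ.2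
  rw [h1, h11] at this
  exact lt_irrefl 0 this

private lemma root_w (θ : ℝ) (hθ : θ ∈ Set.Ioo (0:ℝ) 1)
    (heq : 2 * θ * Real.log θ = θ - 1) :
    Real.log θ - 1/2 ≤ -1 ∧
    (Real.log θ - 1/2) * Real.exp (Real.log θ - 1/2)
      = -1 / (2 * Real.sqrt (Real.exp 1)) := by
  have hlt := root_lt θ hθ heq
  have hlog : Real.log θ < -(1/2) := by
    have := Real.log_lt_log hθ.1 hlt
    rwa [Real.log_exp] at this
  constructor
  · linarith
  · have hexp : Real.exp (Real.log θ - 1/2) = θ / Real.exp (1/2 : ℝ) := by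
      rw [Real.exp_sub, Real.exp_log hθ.1]
    have hsqrt : Real.sqrt (Real.exp 1) = Real.exp (1/2 : ℝ) := by
      rw [show Real.exp 1 = Real.exp (1/2:ℝ) ^ 2 by
        rw [sq, ← Real.exp_add]; norm_num]
      exact Real.sqrt_sq (Real.exp_pos _).le
    rw [hexp, hsqrt]
    have hpos := Real.exp_pos (1/2 : ℝ)
    field_simp
    nlinarith [heq]

theorem stmt_12 :
    (∃! θ : ℝ, θ ∈ Set.Ioo (0 : ℝ) 1 ∧ 2 * θ * Real.log θ = θ - 1) ∧
    (∀ θ w : ℝ, θ ∈ Set.Ioo (0 : ℝ) 1 → 2 * θ * Real.log θ = θ - 1 →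
      w ≤ -1 → w * Real.exp w = -1 / (2 * Real.sqrt (Real.exp 1)) →
      θ = Real.exp (1 / 2 + w)) := by
  have key : ∀ θ w : ℝ, θ ∈ Set.Ioo (0 : ℝ) 1 → 2 * θ * Real.log θ = θ - 1 →
      w ≤ -1 → w * Real.exp w = -1 / (2 * Real.sqrt (Real.exp 1)) →
      θ = Real.exp (1 / 2 + w) := by
    intro θ w hθ heq hw hweq
    obtain ⟨hw0, hw0eq⟩ := root_w θ hθ heq
    have : Real.log θ - 1/2 = w := by
      apply gAnti.injOn (Set.mem_Iic.mpr hw0) (Set.mem_Iic.mpr hw)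
      simp only [hw0eq, hweq]
    have hθeq : θ = Real.exp (Real.log θ) := (Real.exp_log hθ.1).symm
    rw [hθeq]
    congr 1
    linarith
  refine ⟨?_, key⟩
  -- existence via IVT
  set f := fun x : ℝ => 2 * (x * Real.log x) - x + 1 with hf
  have ha : (0:ℝ) < Real.exp (-2 : ℝ) := Real.exp_pos _
  have hab : Real.exp (-2:ℝ) < Real.exp (-(1/2):ℝ) := Real.exp_lt_exp.mpr (by norm_num)
  have hfa : 0 < f (Real.exp (-2:ℝ)) := by
    simp only [hf, Real.log_exp]
    have hinv : Real.exp (-2:ℝ) * Real.exp (2:ℝ) = 1 := by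
      rw [← Real.exp_add]; norm_num
    have h2 : Real.exp (2:ℝ) = Real.exp 1 * Real.exp 1 := by
      rw [← Real.exp_add]; norm_num
    have he := Real.exp_one_gt_d9
    have h5 : (5:ℝ) < Real.exp (2:ℝ) := by rw [h2]; nlinarith
    nlinarith [Real.exp_pos (-2:ℝ)]
  have hfb : f (Real.exp (-(1/2):ℝ)) < 0 := by
    simp only [hf, Real.log_exp]
    have hinv : Real.exp (-(1/2):ℝ) * Real.exp (1/2:ℝ) = 1 := by
      rw [← Real.exp_add]; norm_num
    nlinarith [exp_half_lt_two, Real.exp_pos (-(1/2):ℝ)]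
  have hcont : ContinuousOn f (Set.Icc (Real.exp (-2:ℝ)) (Real.exp (-(1/2):ℝ))) := by
    apply fcont.mono
    intro x hx
    simp only [mem_compl_iff, mem_singleton_iff]
    intro h
    rw [h] at hx
    linarith [hx.1]
  have hiv := intermediate_value_Ioo' (le_of_lt hab) hcont
  have h0 : (0:ℝ) ∈ Set.Ioo (f (Real.exp (-(1/2):ℝ))) (f (Real.exp (-2:ℝ))) := ⟨hfb, hfa⟩
  obtain ⟨θ, hθmem, hθeq⟩ := hiv h0
  have hθIoo : θ ∈ Set.Ioo (0:ℝ) 1 := by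
    constructor
    · exact lt_trans ha hθmem.1
    · exact lt_trans hθmem.2 (Real.exp_lt_one_iff.mpr (by norm_num))
  have hroot : 2 * θ * Real.log θ = θ - 1 := by
    have : f θ = 0 := hθeq
    simp only [hf] at this
    linarith
  refine ⟨θ, ⟨hθIoo, hroot⟩, ?_⟩
  rintro θ' ⟨hθ'Ioo, hθ'eq⟩
  obtain ⟨hw1, hw1eq⟩ := root_w θ' hθ'Ioo hθ'eq
  obtain ⟨hw2, hw2eq⟩ := root_w θ hθIoo hroot
  have : Real.log θ' - 1/2 = Real.log θ - 1/2 := by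
    apply gAnti.injOn (Set.mem_Iic.mpr hw1) (Set.mem_Iic.mpr hw2)
    simp only [hw1eq, hw2eq]
  have hlog : Real.log θ' = Real.log θ := by linarith
  calc θ' = Real.exp (Real.log θ') := (Real.exp_log hθ'Ioo.1).symm
    _ = Real.exp (Real.log θ) := by rw [hlog]
    _ = θ := Real.exp_log hθIoo.1
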